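/- For each A ∈ ℝ and each B ∈ (0, B̄), the derivative of g_{A,B} satisfies g_{A,B}'(x) < 0 for all x ∈ (−∞, x₁(B)), g_{A,B}'(x) > 0 for all x ∈ (x₁(B), x₂(B)), and g_{A,B}'(x) < 0 for all x ∈ (x₂(B), ∞). -/

import Mathlib

open MeasureTheory Set Filter Topology

noncomputable def gfun (μ σ a : ℝ) (h : ℝ → ℝ) (A B x : ℝ) : ℝ :=
  A - B * Real.exp (-(2 * μ / σ ^ 2) * (x - a)) -
    (2 * μ / σ ^ 2) / μ * ∫ y in a..x, h y * Real.exp (-(2 * μ / σ ^ 2) * (x - y))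

noncomputable def F1 (μ σ a : ℝ) (h : ℝ → ℝ) (B x : ℝ) : ℝ :=
  B - 1 / μ * ∫ y in a..x, deriv h y * Real.exp ((2 * μ / σ ^ 2) * (y - a))

noncomputable def Bbar (μ σ a : ℝ) (h : ℝ → ℝ) : ℝ :=
  -(1 / μ) * ∫ y in Set.Iic a, deriv h y * Real.exp ((2 * μ / σ ^ 2) * (y - a))

private lemma auxE_hasDeriv (L a y : ℝ) :
    HasDerivAt (fun t => Real.exp (L * (t - a))) (L * Real.exp (L * (y - a))) y := by
  have h1 : HasDerivAt (fun t : ℝ => L * (t - a)) L y := by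
    simpa using ((hasDerivAt_id y).sub_const a).const_mul L
  simpa [mul_comm] using h1.exp

private lemma aux_intOn {a L : ℝ} {h : ℝ → ℝ} (hL : 0 < L)
    (hconv : ConvexOn ℝ Set.univ h)
    (hC2 : ∀ x : ℝ, x ≠ a → ContDiffAt ℝ 2 h x)
    (hpos : ∀ x, a < x → 0 < deriv h x)
    (hint : IntegrableOn (fun y => |deriv h y| * Real.exp (L * (y - a))) (Set.Iic a)) :
    ∀ u v : ℝ, IntervalIntegrable (fun y => deriv h y * Real.exp (L * (y - a))) volume u v := by
  have hmeas : AEStronglyMeasurable (fun y => deriv h y * Real.exp (L * (y - a))) volume :=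
    ((measurable_deriv h).mul
      (Real.continuous_exp.comp (continuous_const.mul (continuous_id.sub continuous_const))).measurable).aestronglyMeasurable
  have hmono : ∀ u v : ℝ, a < u → u < v → deriv h u ≤ deriv h v := by
    intro u v hu huv
    have h1 := hconv.deriv_le_slope (mem_univ u) (mem_univ v) huv
      ((hC2 u hu.ne').differentiableAt two_ne_zero)
    have h2 := hconv.slope_le_deriv (mem_univ u) (mem_univ v) huv
      ((hC2 v (hu.trans huv).ne').differentiableAt two_ne_zero)
    linarith
  have hIic : IntegrableOn (fun y => deriv h y * Real.exp (L * (y - a))) (Set.Iic a) := by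
    refine hint.mono' hmeas.restrict ?_
    filter_upwards with y
    rw [Real.norm_eq_abs, abs_mul, abs_of_pos (Real.exp_pos _)]
  have hIoc : ∀ M : ℝ, IntegrableOn (fun y => deriv h y * Real.exp (L * (y - a))) (Set.Ioc a M) := by
    intro M
    rcases le_or_gt M a with hMa | haM
    · rw [Set.Ioc_eq_empty (by exact fun hc => absurd (hc.trans_le hMa) (lt_irrefl a))]
      exact integrableOn_empty
    · refine Measure.integrableOn_of_bounded (M := deriv h M * Real.exp (L * (M - a)))
        measure_Ioc_lt_top.ne hmeas ?_
      filter_upwards [ae_restrict_mem measurableSet_Ioc] with y hy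
      have h1 : 0 < deriv h y := hpos y hy.1
      have h2 : deriv h y ≤ deriv h M := by
        rcases eq_or_lt_of_le hy.2 with he | hl
        · rw [he]
        · exact hmono y M hy.1 hl
      have h3 : Real.exp (L * (y - a)) ≤ Real.exp (L * (M - a)) := by
        apply Real.exp_le_exp.2
        nlinarith [hy.2]
      rw [Real.norm_eq_abs, abs_of_pos (mul_pos h1 (Real.exp_pos _))]
      exact mul_le_mul h2 h3 (Real.exp_pos _).le (h1.trans_le h2).le
  intro u v
  rw [intervalIntegrable_iff]
  refine IntegrableOn.mono_set (hIic.union (hIoc (max u v))) ?_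
  intro y hy
  have hy' : y ∈ Set.Ioc (min u v) (max u v) := hy
  rcases le_or_gt y a with h1 | h1
  · exact Or.inl h1
  · exact Or.inr ⟨h1, hy'.2⟩

private lemma aux_IBP {a L : ℝ} {h : ℝ → ℝ} (hL : 0 < L)
    (hconv : ConvexOn ℝ Set.univ h)
    (hcont : Continuous h)
    (ha : h a = 0)
    (hC2 : ∀ x : ℝ, x ≠ a → ContDiffAt ℝ 2 h x)
    (hpos : ∀ x, a < x → 0 < deriv h x)
    (hint : IntegrableOn (fun y => |deriv h y| * Real.exp (L * (y - a))) (Set.Iic a)) :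
    ∀ x : ℝ, (∫ y in a..x, deriv h y * Real.exp (L * (y - a)))
      = h x * Real.exp (L * (x - a)) - L * ∫ y in a..x, h y * Real.exp (L * (y - a)) := by
  have hEcont : Continuous fun y => Real.exp (L * (y - a)) :=
    Real.continuous_exp.comp (continuous_const.mul (continuous_id.sub continuous_const))
  have hII := aux_intOn hL hconv hC2 hpos hint
  have hIIh : ∀ u v : ℝ, IntervalIntegrable (fun y => h y * (L * Real.exp (L * (y - a)))) volume u v :=
    fun u v => (hcont.mul (continuous_const.mul hEcont)).intervalIntegrable u v
  have hPderiv : ∀ y : ℝ, y ≠ a → HasDerivAt (fun t => h t * Real.exp (L * (t - a)))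
      (deriv h y * Real.exp (L * (y - a)) + h y * (L * Real.exp (L * (y - a)))) y := by
    intro y hy
    exact (((hC2 y hy).differentiableAt two_ne_zero).hasDerivAt).mul (auxE_hasDeriv L a y)
  have key : ∀ u v : ℝ, u ≤ v → a ∉ Set.Ioo u v →
      (∫ y in u..v, (deriv h y * Real.exp (L * (y - a)) + h y * (L * Real.exp (L * (y - a)))))
        = h v * Real.exp (L * (v - a)) - h u * Real.exp (L * (u - a)) := by
    intro u v huv hnot
    exact intervalIntegral.integral_eq_sub_of_hasDeriv_right_of_le huv
      ((hcont.mul hEcont).continuousOn)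
      (fun y hy => (hPderiv y (fun he => hnot (he ▸ hy))).hasDerivWithinAt)
      ((hII u v).add (hIIh u v))
  have hsplit : ∀ u v : ℝ,
      (∫ y in u..v, (deriv h y * Real.exp (L * (y - a)) + h y * (L * Real.exp (L * (y - a)))))
        = (∫ y in u..v, deriv h y * Real.exp (L * (y - a)))
          + L * ∫ y in u..v, h y * Real.exp (L * (y - a)) := by
    intro u v
    rw [intervalIntegral.integral_add (hII u v) (hIIh u v)]
    congr 1
    rw [← intervalIntegral.integral_const_mul]
    apply intervalIntegral.integral_congr
    intro y _
    ring
  intro x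
  rcases lt_trichotomy x a with hx | hx | hx
  · have h1 := key x a hx.le (fun hc => absurd hc.2 (lt_irrefl a))
    rw [hsplit] at h1
    rw [intervalIntegral.integral_symm x a, intervalIntegral.integral_symm x a
      (f := fun y => h y * Real.exp (L * (y - a)))]
    rw [ha] at h1
    set I1 := ∫ y in x..a, deriv h y * Real.exp (L * (y - a))
    set I2 := ∫ y in x..a, h y * Real.exp (L * (y - a))
    -- h1 : I1 + L * I2 = 0 * _ - h x * exp(...)
    have h2 : I1 + L * I2 = - (h x * Real.exp (L * (x - a))) := by rw [h1]; ring
    have h3 : L * -I2 = -(L * I2) := by ring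
    rw [h3]
    linarith
  · subst hx
    simp [ha]
  · have h1 := key a x hx.le (fun hc => absurd hc.1 (lt_irrefl a))
    rw [hsplit] at h1
    rw [ha] at h1
    set I1 := ∫ y in a..x, deriv h y * Real.exp (L * (y - a))
    set I2 := ∫ y in a..x, h y * Real.exp (L * (y - a))
    have h2 : I1 + L * I2 = h x * Real.exp (L * (x - a)) := by rw [h1]; ring
    linarith

theorem stmt4 (μ σ a : ℝ) (h : ℝ → ℝ)
    (hμ : 0 < μ) (hσ : 0 < σ)
    (hconv : ConvexOn ℝ Set.univ h)
    (hcont : Continuous h)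
    (hnonneg : ∀ x, 0 ≤ h x)
    (ha : h a = 0)
    (hC2 : ∀ x : ℝ, x ≠ a → ContDiffAt ℝ 2 h x)
    (hneg : ∀ x, x < a → deriv h x < 0)
    (hpos : ∀ x, a < x → 0 < deriv h x)
    (hint : IntegrableOn (fun y => |deriv h y| * Real.exp ((2 * μ / σ ^ 2) * (y - a))) (Set.Iic a))
    (x1 x2 : ℝ → ℝ)
    (hx1 : ∀ B ∈ Set.Ioo 0 (Bbar μ σ a h), x1 B < a ∧ F1 μ σ a h B (x1 B) = 0)
    (hx2 : ∀ B : ℝ, 0 < B → a < x2 B ∧ F1 μ σ a h B (x2 B) = 0)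
    :
    ∀ A : ℝ, ∀ B ∈ Set.Ioo 0 (Bbar μ σ a h),
      (∀ x : ℝ, x < x1 B → deriv (gfun μ σ a h A B) x < 0) ∧
      (∀ x ∈ Set.Ioo (x1 B) (x2 B), 0 < deriv (gfun μ σ a h A B) x) ∧
      (∀ x : ℝ, x2 B < x → deriv (gfun μ σ a h A B) x < 0) := by
  intro A B hB
  set L : ℝ := 2 * μ / σ ^ 2 with hLdef
  have hL : 0 < L := by positivity
  have hEcont : Continuous fun y => Real.exp (L * (y - a)) :=
    Real.continuous_exp.comp (continuous_const.mul (continuous_id.sub continuous_const))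
  have hII := aux_intOn (a := a) (h := h) hL hconv hC2 hpos hint
  have hIBP := aux_IBP (a := a) (h := h) hL hconv hcont ha hC2 hpos hint
  -- the derivative identity
  have hgderiv : ∀ x : ℝ, deriv (gfun μ σ a h A B) x
      = L * Real.exp (-L * (x - a)) * F1 μ σ a h B x := by
    intro x
    have hgeq : gfun μ σ a h A B = fun x => A - Real.exp (-L * (x - a)) *
        (B + L / μ * ∫ y in a..x, h y * Real.exp (L * (y - a))) := by
      funext t
      have hintg : (∫ y in a..t, h y * Real.exp (-L * (t - y)))
          = Real.exp (-L * (t - a)) * ∫ y in a..t, h y * Real.exp (L * (y - a)) := by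
        rw [← intervalIntegral.integral_const_mul]
        apply intervalIntegral.integral_congr
        intro y _
        dsimp only
        rw [show -L * (t - y) = -L * (t - a) + L * (y - a) by ring, Real.exp_add]
        ring
      rw [gfun, hintg, ← hLdef]
      ring
    have hu : HasDerivAt (fun t => ∫ y in a..t, h y * Real.exp (L * (y - a)))
        (h x * Real.exp (L * (x - a))) x := by
      exact intervalIntegral.integral_hasDerivAt_right
        ((hcont.mul hEcont).intervalIntegrable a x)
        ((hcont.mul hEcont).stronglyMeasurableAtFilter _ _)
        ((hcont.mul hEcont).continuousAt)
    have he : HasDerivAt (fun t => Real.exp (-L * (t - a))) (-L * Real.exp (-L * (x - a))) x :=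
      auxE_hasDeriv (-L) a x
    have hG : HasDerivAt (fun t => A - Real.exp (-L * (t - a)) *
        (B + L / μ * ∫ y in a..t, h y * Real.exp (L * (y - a))))
        (-(((-L * Real.exp (-L * (x - a))) *
            (B + L / μ * ∫ y in a..x, h y * Real.exp (L * (y - a))))
          + Real.exp (-L * (x - a)) * (L / μ * (h x * Real.exp (L * (x - a)))))) x := by
      exact (he.mul ((hu.const_mul (L / μ)).const_add B)).const_sub A
    rw [hgeq, hG.deriv, F1, ← hLdef, hIBP x]
    ring
  have hexp : ∀ x : ℝ, 0 < L * Real.exp (-L * (x - a)) := fun x => by positivity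
  -- monotonicity of F1
  have hdiffF : ∀ u v : ℝ, F1 μ σ a h B u - F1 μ σ a h B v
      = 1 / μ * ∫ y in u..v, deriv h y * Real.exp (L * (y - a)) := by
    intro u v
    have hadd := intervalIntegral.integral_add_adjacent_intervals (hII a u) (hII u v)
    rw [F1, F1, ← hLdef]
    rw [← hadd]
    ring
  have hdecr : ∀ u v : ℝ, a ≤ u → u < v → F1 μ σ a h B v < F1 μ σ a h B u := by
    intro u v hu huv
    have hposI : 0 < ∫ y in u..v, deriv h y * Real.exp (L * (y - a)) := by
      apply intervalIntegral.intervalIntegral_pos_of_pos_on (hII u v) _ huv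
      intro y hy
      exact mul_pos (hpos y (hu.trans_lt hy.1)) (Real.exp_pos _)
    have := hdiffF u v
    nlinarith [one_div_pos.2 hμ]
  have hincr : ∀ u v : ℝ, v ≤ a → u < v → F1 μ σ a h B u < F1 μ σ a h B v := by
    intro u v hv huv
    have hposI : 0 < ∫ y in u..v, -(deriv h y * Real.exp (L * (y - a))) := by
      apply intervalIntegral.intervalIntegral_pos_of_pos_on (hII u v).neg _ huv
      intro y hy
      have := hneg y (hy.2.trans_le hv)
      have he := Real.exp_pos (L * (y - a))
      simp only [Pi.neg_apply]
      nlinarith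
    rw [intervalIntegral.integral_neg] at hposI
    have := hdiffF u v
    nlinarith [one_div_pos.2 hμ]
  obtain ⟨hx1a, hx1z⟩ := hx1 B hB
  obtain ⟨hx2a, hx2z⟩ := hx2 B hB.1
  refine ⟨?_, ?_, ?_⟩
  · intro x hx
    rw [hgderiv x]
    have : F1 μ σ a h B x < 0 := by
      rw [← hx1z]
      exact hincr x (x1 B) hx1a.le hx
    exact mul_neg_of_pos_of_neg (hexp x) this
  · intro x hx
    rw [hgderiv x]
    have : 0 < F1 μ σ a h B x := by
      rcases le_or_gt x a with hxa | hxa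
      · rw [← hx1z]
        exact hincr (x1 B) x hxa hx.1
      · rw [← hx2z]
        exact hdecr x (x2 B) hxa.le hx.2
    exact mul_pos (hexp x) this
  · intro x hx
    rw [hgderiv x]
    have : F1 μ σ a h B x < 0 := by
      rw [← hx2z]
      exact hdecr (x2 B) x hx2a.le hx
    exact mul_neg_of_pos_of_neg (hexp x) this
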